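/- arXiv:0906.3565 — 3 statements merged into one kernel-verified Lean document; each statement's English description precedes it below -/
import Mathlib

section
/- Let g, f : ℝ → ℂ∖{0} be C¹ and 2π-periodic, let μ, ν be nonzero integers, and suppose the winding number of g about 0 equals 1, i.e. (1/(2πi))∫₀^{2π} g′(θ)/g(θ) dθ = 1. Let t₀ ∈ ℂ and let (t_n)_{n≥1}, (v_n)_{n≥1} be sequences of complex numbers for which there exist R > max_θ|g(θ)| and 0 < ρ < min_θ|g(θ)| with Σ_{n≥1} n|t_n|R^{n} < ∞ and Σ_{n≥1} |v_n|ρ^{−n} < ∞, such that for all θ: μ·g(θ)^{μ}·f(θ)^{−ν} = Σ_{n≥1} n t_n g(θ)^{n} + t₀ + Σ_{n≥1} v_n g(θ)^{−n}. Then (1/(2πi)) ∫₀^{2π} μ·g(θ)^{2μ−1}·f(θ)^{−2ν}·g′(θ) dθ = (1/μ)·( t₀² + 2 Σ_{n≥1} n t_n v_n ), with the series on the right converging absolutely. -/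
open MeasureTheory

lemma term_integral (g : ℝ → ℂ) (hg : ContDiff ℝ 1 g)
    (hgper : Function.Periodic g (2 * Real.pi)) (hg0 : ∀ θ : ℝ, g θ ≠ 0)
    (k : ℤ) (hk : k ≠ 0) :
    ∫ θ in (0:ℝ)..(2 * Real.pi), g θ ^ (k - 1) * deriv g θ = 0 := by
  have hgd : Differentiable ℝ g := hg.differentiable one_ne_zero
  have hderiv : ∀ θ : ℝ, HasDerivAt (fun t => g t ^ k)
      ((k : ℂ) * (g θ ^ (k - 1) * deriv g θ)) θ := by
    intro θ
    have h1 := (hasDerivAt_zpow k (g θ) (Or.inl (hg0 θ))).comp θ (hgd θ).hasDerivAt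
    exact h1.congr_deriv (by ring)
  have hcont : Continuous fun θ => (k : ℂ) * (g θ ^ (k - 1) * deriv g θ) :=
    continuous_const.mul ((hg.continuous.zpow₀ (k - 1) (fun θ => Or.inl (hg0 θ))).mul
      (hg.continuous_deriv le_rfl))
  have heq := intervalIntegral.integral_eq_sub_of_hasDerivAt
    (a := 0) (b := 2*Real.pi) (f := fun t => g t ^ k) (fun θ _ => hderiv θ) (hcont.intervalIntegrable _ _)
  have hper : g (2 * Real.pi) = g 0 := by simpa using hgper 0
  rw [show (fun t => g t ^ k) (2*Real.pi) - (fun t => g t ^ k) 0 = 0 by simp [hper],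
    intervalIntegral.integral_const_mul] at heq
  rcases mul_eq_zero.mp heq with h | h
  · exact absurd (by exact_mod_cast h) hk
  · exact h

lemma wind_integral (g : ℝ → ℂ) (hg0 : ∀ θ : ℝ, g θ ≠ 0)
    (hwind : (2 * Real.pi * Complex.I)⁻¹ *
      ∫ θ in (0:ℝ)..(2 * Real.pi), deriv g θ / g θ = 1) :
    ∫ θ in (0:ℝ)..(2 * Real.pi), g θ ^ (-1 : ℤ) * deriv g θ
      = 2 * Real.pi * Complex.I := by
  have h2πi : (2 * Real.pi * Complex.I : ℂ) ≠ 0 := by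
    simp [Real.pi_ne_zero, Complex.I_ne_zero, Complex.ext_iff, Real.pi_pos.ne']
  have : ∫ θ in (0:ℝ)..(2 * Real.pi), deriv g θ / g θ = 2 * Real.pi * Complex.I := by
    field_simp at hwind
    linear_combination hwind
  rw [← this]
  congr 1
  ext θ
  rw [zpow_neg_one, div_eq_mul_inv, mul_comm]

lemma circle_key (g : ℝ → ℂ) (hg : ContDiff ℝ 1 g)
    (hgper : Function.Periodic g (2 * Real.pi)) (hg0 : ∀ θ : ℝ, g θ ≠ 0)
    (hwind : (2 * Real.pi * Complex.I)⁻¹ *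
      ∫ θ in (0:ℝ)..(2 * Real.pi), deriv g θ / g θ = 1)
    (a : ℤ → ℂ) (c : ℤ → ℝ) (hc : Summable c)
    (ρ : ℝ) (hρ0 : 0 < ρ) (hρg : ∀ θ : ℝ, ρ ≤ ‖g θ‖)
    (hac : ∀ (n : ℤ) (θ : ℝ), ‖a n * g θ ^ n‖ ≤ c n) :
    ∫ θ in (0:ℝ)..(2 * Real.pi), (∑' n : ℤ, a n * g θ ^ n) ^ 2 * (deriv g θ / g θ)
      = (2 * Real.pi * Complex.I) * ∑' n : ℤ, a n * a (-n) := by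
  have hπ : (0:ℝ) < 2 * Real.pi := by positivity
  have hc0 : ∀ n, 0 ≤ c n := fun n => le_trans (norm_nonneg _) (hac n 0)
  have hgc : Continuous g := hg.continuous
  have hg'c : Continuous (deriv g) := hg.continuous_deriv le_rfl
  obtain ⟨M, hM⟩ : ∃ M, ∀ θ ∈ Set.Icc (0:ℝ) (2 * Real.pi), ‖deriv g θ‖ ≤ M :=
    isCompact_Icc.exists_bound_of_continuousOn hg'c.continuousOn
  have hM0 : 0 ≤ M := le_trans (norm_nonneg _) (hM 0 ⟨le_rfl, hπ.le⟩)
  set F : ℤ × ℤ → ℝ → ℂ :=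
    fun p θ => (a p.1 * g θ ^ p.1) * (a p.2 * g θ ^ p.2) * (deriv g θ / g θ) with hF
  have hsumθ : ∀ θ, Summable fun n : ℤ => ‖a n * g θ ^ n‖ := fun θ =>
    hc.of_nonneg_of_le (fun n => norm_nonneg _) (fun n => hac n θ)
  have hpoint : ∀ θ, (∑' n : ℤ, a n * g θ ^ n) ^ 2 * (deriv g θ / g θ)
      = ∑' p : ℤ × ℤ, F p θ := by
    intro θ
    rw [sq, tsum_mul_tsum_of_summable_norm (hsumθ θ) (hsumθ θ), ← tsum_mul_right]
  simp only [intervalIntegral.integral_of_le hπ.le]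
  have hFcont : ∀ p : ℤ × ℤ, Continuous (F p) := by
    intro p
    apply Continuous.mul
    · exact ((continuous_const.mul (hgc.zpow₀ p.1 (fun θ => Or.inl (hg0 θ)))).mul
        (continuous_const.mul (hgc.zpow₀ p.2 (fun θ => Or.inl (hg0 θ)))))
    · exact hg'c.div hgc hg0
  have hFint : ∀ p : ℤ × ℤ, IntegrableOn (F p) (Set.Ioc (0:ℝ) (2 * Real.pi)) :=
    fun p => (hFcont p).integrableOn_Ioc
  have hFbound : ∀ (p : ℤ × ℤ), ∀ θ ∈ Set.Ioc (0:ℝ) (2 * Real.pi),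
      ‖F p θ‖ ≤ c p.1 * c p.2 * (M / ρ) := by
    intro p θ hθ
    have h1 : ‖deriv g θ / g θ‖ ≤ M / ρ := by
      rw [norm_div]
      exact div_le_div₀ hM0 (hM θ ⟨hθ.1.le, hθ.2⟩) hρ0 (hρg θ)
    calc ‖F p θ‖ = ‖a p.1 * g θ ^ p.1‖ * ‖a p.2 * g θ ^ p.2‖ * ‖deriv g θ / g θ‖ := by
          simp only [hF]; rw [norm_mul, norm_mul]
      _ ≤ c p.1 * c p.2 * (M / ρ) := by
          exact mul_le_mul (mul_le_mul (hac p.1 θ) (hac p.2 θ) (norm_nonneg _) (hc0 _)) h1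
            (norm_nonneg _) (mul_nonneg (hc0 _) (hc0 _))
  have hkey : ∀ p : ℤ × ℤ, ∫ θ in Set.Ioc (0:ℝ) (2 * Real.pi), ‖F p θ‖
      ≤ c p.1 * c p.2 * (M / ρ * (2 * Real.pi)) := by
    intro p
    calc ∫ θ in Set.Ioc (0:ℝ) (2 * Real.pi), ‖F p θ‖
        ≤ ∫ _ in Set.Ioc (0:ℝ) (2 * Real.pi), c p.1 * c p.2 * (M / ρ) :=
          setIntegral_mono_on (hFint p).norm (integrableOn_const (by
            simp [Real.volume_Ioc, ENNReal.mul_eq_top]) enorm_ne_top)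
            measurableSet_Ioc (hFbound p)
      _ = c p.1 * c p.2 * (M / ρ * (2 * Real.pi)) := by
          rw [setIntegral_const, measureReal_def, Real.volume_Ioc, sub_zero,
            ENNReal.toReal_ofReal hπ.le, smul_eq_mul]
          ring
  have hFsummable : Summable fun p : ℤ × ℤ => ∫ θ in Set.Ioc (0:ℝ) (2 * Real.pi), ‖F p θ‖ :=
    Summable.of_nonneg_of_le (fun p => integral_nonneg fun θ => norm_nonneg _) hkey
      ((hc.mul_of_nonneg hc hc0 hc0).mul_right _)
  calc ∫ θ in Set.Ioc (0:ℝ) (2 * Real.pi), (∑' n : ℤ, a n * g θ ^ n) ^ 2 * (deriv g θ / g θ)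
      = ∫ θ in Set.Ioc (0:ℝ) (2 * Real.pi), ∑' p : ℤ × ℤ, F p θ := by
        congr 1; ext θ; exact hpoint θ
    _ = ∑' p : ℤ × ℤ, ∫ θ in Set.Ioc (0:ℝ) (2 * Real.pi), F p θ :=
        (integral_tsum_of_summable_integral_norm hFint hFsummable).symm
    _ = ∑' p : ℤ × ℤ, a p.1 * a p.2 * (if p.1 + p.2 = 0 then 2 * Real.pi * Complex.I else 0) := by
        apply tsum_congr
        intro p
        have hFeq : ∀ θ, F p θ = a p.1 * a p.2 * (g θ ^ (p.1 + p.2 - 1) * deriv g θ) := by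
          intro θ
          simp only [hF]
          rw [zpow_sub_one₀ (hg0 θ), zpow_add₀ (hg0 θ), div_eq_mul_inv]
          ring
        simp only [hFeq]
        rw [integral_const_mul, ← intervalIntegral.integral_of_le hπ.le]
        by_cases hp : p.1 + p.2 = 0
        · rw [if_pos hp, hp]
          have := wind_integral g hg0 hwind
          rw [show (0:ℤ) - 1 = -1 by ring, this]
        · rw [if_neg hp, term_integral g hg hgper hg0 _ hp, mul_zero]
    _ = (2 * Real.pi * Complex.I) * ∑' n : ℤ, a n * a (-n) := by
        rw [← Function.Injective.tsum_eq (g := fun n : ℤ => ((n, -n) : ℤ × ℤ))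
          (fun x y h => congrArg Prod.fst h)]
        · simp only [add_neg_cancel, if_pos]
          rw [tsum_mul_right]
          ring
        · intro p hp
          rcases eq_or_ne (p.1 + p.2) 0 with h | h
          · exact ⟨p.1, by ext <;> simp [eq_neg_of_add_eq_zero_right h]⟩
          · simp [h] at hp


/-- Evaluation of `(1/2πi) ∮ μ g^{2μ-1} f^{-2ν} dg` for the special solution
`ℋ(z₁,z₂) = z₁^μ z₂^{-ν}`: if the Orlov–Schulman expansion
`μ g^μ f^{-ν} = Σ_{n≥1} n t_n g^n + t₀ + Σ_{n≥1} v_n g^{-n}` holds on the unit circle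
and the winding number of `g` about `0` is `1`, then the integral equals
`(1/μ)(t₀² + 2 Σ_{n≥1} n t_n v_n)`, the series converging absolutely. -/
theorem stmt_15
    (g f : ℝ → ℂ) (hg : ContDiff ℝ 1 g) (hf : ContDiff ℝ 1 f)
    (hgper : Function.Periodic g (2 * Real.pi))
    (hfper : Function.Periodic f (2 * Real.pi))
    (hg0 : ∀ θ : ℝ, g θ ≠ 0) (hf0 : ∀ θ : ℝ, f θ ≠ 0)
    (μ ν : ℤ) (hμ : μ ≠ 0) (hν : ν ≠ 0)
    (hwind : (2 * Real.pi * Complex.I)⁻¹ *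
      ∫ θ in (0:ℝ)..(2 * Real.pi), deriv g θ / g θ = 1)
    (t₀ : ℂ) (tp vp : ℕ → ℂ)
    (R ρ : ℝ) (hρ0 : 0 < ρ)
    (hρg : ∀ θ : ℝ, ρ < ‖g θ‖)
    (hgR : ∀ θ : ℝ, ‖g θ‖ < R)
    (htpsum : Summable fun n : ℕ => (n + 1 : ℝ) * ‖tp (n + 1)‖ * R ^ (n + 1))
    (hvpsum : Summable fun n : ℕ => ‖vp (n + 1)‖ * ρ ^ (-(n + 1 : ℤ)))
    (hexp : ∀ θ : ℝ,
      (μ : ℂ) * g θ ^ μ * f θ ^ (-ν)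
        = (∑' n : ℕ, ((n : ℂ) + 1) * tp (n + 1) * g θ ^ (n + 1)) + t₀
          + ∑' n : ℕ, vp (n + 1) * g θ ^ (-(n + 1 : ℤ))) :
    Summable (fun n : ℕ => ((n : ℂ) + 1) * tp (n + 1) * vp (n + 1)) ∧
    (2 * Real.pi * Complex.I)⁻¹ *
        ∫ θ in (0:ℝ)..(2 * Real.pi),
          (μ : ℂ) * g θ ^ (2 * μ - 1) * f θ ^ (-(2 * ν)) * deriv g θ
      = (μ : ℂ)⁻¹ * (t₀ ^ 2 + 2 * ∑' n : ℕ, ((n : ℂ) + 1) * tp (n + 1) * vp (n + 1)) := by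
  have hρR : ρ < R := (hρg 0).trans (hgR 0)
  have hR0 : (0:ℝ) < R := hρ0.trans hρR
  have hμC : (μ:ℂ) ≠ 0 := Int.cast_ne_zero.mpr hμ
  have h2πi : (2 * Real.pi * Complex.I : ℂ) ≠ 0 := by
    simp [Real.pi_ne_zero, Complex.I_ne_zero, Complex.ext_iff, Real.pi_pos.ne']
  set a : ℤ → ℂ := fun n =>
    if 0 < n then (n : ℂ) * tp n.toNat else if n = 0 then t₀ else vp (-n).toNat with ha
  set c : ℤ → ℝ := fun n =>
    if 0 < n then (n : ℝ) * ‖tp n.toNat‖ * R ^ n.toNat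
    else if n = 0 then ‖t₀‖ else ‖vp (-n).toNat‖ * ρ ^ n with hcdef
  have hcast : ∀ m : ℕ, ((m:ℤ) + 1) = ((m + 1 : ℕ) : ℤ) := by intro m; push_cast; ring
  have haP : ∀ m : ℕ, a ((m:ℤ) + 1) = ((m:ℂ) + 1) * tp (m + 1) := by
    intro m
    simp only [ha]
    simp only [hcast m, Int.toNat_natCast]
    rw [if_pos (by positivity)]
    push_cast; ring
  have haN : ∀ m : ℕ, a (-((m:ℤ) + 1)) = vp (m + 1) := by
    intro m
    simp only [ha]
    rw [if_neg (by omega), if_neg (by omega), neg_neg]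
    have h : ((m:ℤ) + 1).toNat = m + 1 := by omega
    rw [h]
  have ha0 : a 0 = t₀ := by simp only [ha]; norm_num
  have hcP : ∀ m : ℕ, c ((m:ℤ) + 1) = ((m:ℝ) + 1) * ‖tp (m + 1)‖ * R ^ (m + 1) := by
    intro m
    simp only [hcdef]
    simp only [hcast m, Int.toNat_natCast]
    rw [if_pos (by positivity)]
    push_cast; ring
  have hcN : ∀ m : ℕ, c (-((m:ℤ) + 1)) = ‖vp (m + 1)‖ * ρ ^ (-((m:ℤ) + 1)) := by
    intro m
    simp only [hcdef]
    rw [if_neg (by omega), if_neg (by omega), neg_neg]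
    have h : ((m:ℤ) + 1).toNat = m + 1 := by omega
    rw [h]
  have hc0 : c 0 = ‖t₀‖ := by simp only [hcdef]; norm_num
  have hcnat1 : Summable fun m : ℕ => c ((m:ℤ) + 1) := by
    apply htpsum.congr
    intro m
    rw [hcP m]
  have hcnat : Summable fun m : ℕ => c m := by
    rw [← summable_nat_add_iff 1]
    apply hcnat1.congr
    intro m
    rw [hcast m]
  have hcneg : Summable fun m : ℕ => c (-((m:ℤ) + 1)) := by
    apply hvpsum.congr
    intro m
    rw [hcN m]
  have hcsum : Summable c := Summable.of_nat_of_neg_add_one hcnat hcneg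
  -- the norm bound
  have hac : ∀ (n : ℤ) (θ : ℝ), ‖a n * g θ ^ n‖ ≤ c n := by
    intro n θ
    rcases n with m | m
    · cases m with
      | zero => simp [ha0, hc0, show ((0:ℕ) : ℤ) = 0 from rfl]
      | succ m =>
        rw [show (Int.ofNat (m + 1)) = (m:ℤ) + 1 by simp]
        rw [haP m, hcP m, norm_mul, norm_mul]
        rw [show g θ ^ ((m:ℤ) + 1) = g θ ^ (m + 1 : ℕ) by
          rw [hcast m, zpow_natCast]]
        have h1 : ‖((m:ℂ) + 1)‖ = (m:ℝ) + 1 := by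
          norm_cast
        rw [h1, norm_pow]
        have h2 : ‖g θ‖ ^ (m + 1) ≤ R ^ (m + 1) :=
          pow_le_pow_left₀ (norm_nonneg _) (le_of_lt (hgR θ)) _
        have h3 : (0:ℝ) ≤ ((m:ℝ) + 1) * ‖tp (m + 1)‖ := by positivity
        exact mul_le_mul_of_nonneg_left h2 h3
    · rw [show (Int.negSucc m) = -((m:ℤ) + 1) by rw [Int.negSucc_eq]]
      rw [haN m, hcN m, norm_mul]
      have h1 : ‖g θ ^ (-((m:ℤ) + 1))‖ ≤ ρ ^ (-((m:ℤ) + 1)) := by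
        rw [norm_zpow]
        rw [show -((m:ℤ) + 1) = -(((m + 1 : ℕ)):ℤ) by push_cast; ring]
        rw [zpow_neg, zpow_neg, zpow_natCast, zpow_natCast]
        gcongr
        exact (hρg θ).le
      exact mul_le_mul_of_nonneg_left h1 (norm_nonneg _)
  have hcpos : ∀ n : ℤ, 0 ≤ c n := fun n => le_trans (norm_nonneg _) (hac n 0)
  -- pointwise summability
  have hsnat : ∀ θ, Summable fun m : ℕ => a m * g θ ^ (m:ℤ) := fun θ =>
    Summable.of_norm_bounded hcnat (fun m => hac m θ)
  have hsneg : ∀ θ, Summable fun m : ℕ => a (-((m:ℤ) + 1)) * g θ ^ (-((m:ℤ) + 1)) := fun θ =>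
    Summable.of_norm_bounded hcneg (fun m => hac _ θ)
  -- expansion as a ℤ-indexed sum
  have hh : ∀ θ : ℝ, (μ : ℂ) * g θ ^ μ * f θ ^ (-ν) = ∑' n : ℤ, a n * g θ ^ n := by
    intro θ
    rw [tsum_of_nat_of_neg_add_one (f := fun n : ℤ => a n * g θ ^ n) (hsnat θ) (hsneg θ),
      (hsnat θ).tsum_eq_zero_add, hexp θ]
    have e1 : ∑' m : ℕ, a ((m + 1 : ℕ):ℤ) * g θ ^ (((m + 1:ℕ)):ℤ)
        = ∑' m : ℕ, ((m:ℂ) + 1) * tp (m + 1) * g θ ^ (m + 1) := by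
      refine tsum_congr fun m => ?_
      rw [← hcast m, haP m, hcast m, zpow_natCast]
    have e2 : ∑' m : ℕ, a (-((m:ℤ) + 1)) * g θ ^ (-((m:ℤ) + 1))
        = ∑' m : ℕ, vp (m + 1) * g θ ^ (-((m:ℤ) + 1)) := by
      refine tsum_congr fun m => ?_
      rw [haN m]
    rw [e1, e2]
    simp only [Int.natCast_zero, zpow_zero, mul_one, ha0]
    ring
  -- summability of the diagonal products
  have hT : ∀ m : ℕ, c ((m:ℤ) + 1) ≤ ∑' k : ℕ, c ((k:ℤ) + 1) :=
    fun m => Summable.le_tsum hcnat1 m (fun j _ => hcpos _)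
  have hw : Summable (fun n : ℕ => ((n : ℂ) + 1) * tp (n + 1) * vp (n + 1)) := by
    apply Summable.of_norm_bounded
      (g := fun m : ℕ => (∑' k : ℕ, c ((k:ℤ) + 1)) * c (-((m:ℤ) + 1))) (hcneg.mul_left _)
    intro m
    have hnorm : ‖((m:ℂ) + 1) * tp (m + 1) * vp (m + 1)‖
        = ((m:ℝ) + 1) * ‖tp (m + 1)‖ * ‖vp (m + 1)‖ := by
      rw [norm_mul, norm_mul]
      norm_cast
    have hbig : ‖((m:ℂ) + 1) * tp (m + 1) * vp (m + 1)‖ ≤ c ((m:ℤ) + 1) * c (-((m:ℤ) + 1)) := by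
      rw [hnorm, hcP m, hcN m]
      have hpow : (1:ℝ) ≤ R ^ (m + 1) * ρ ^ (-((m:ℤ) + 1)) := by
        rw [show -((m:ℤ) + 1) = -(((m + 1 : ℕ)):ℤ) by push_cast; ring, zpow_neg, zpow_natCast,
          ← div_eq_mul_inv, le_div_iff₀ (pow_pos hρ0 _), one_mul]
        exact pow_le_pow_left₀ hρ0.le hρR.le _
      calc ((m:ℝ) + 1) * ‖tp (m + 1)‖ * ‖vp (m + 1)‖
          = ((m:ℝ) + 1) * ‖tp (m + 1)‖ * ‖vp (m + 1)‖ * 1 := by ring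
        _ ≤ ((m:ℝ) + 1) * ‖tp (m + 1)‖ * ‖vp (m + 1)‖
            * (R ^ (m + 1) * ρ ^ (-((m:ℤ) + 1))) := by
            apply mul_le_mul_of_nonneg_left hpow
            positivity
        _ = ((m:ℝ) + 1) * ‖tp (m + 1)‖ * R ^ (m + 1)
            * (‖vp (m + 1)‖ * ρ ^ (-((m:ℤ) + 1))) := by ring
    exact hbig.trans (mul_le_mul_of_nonneg_right (hT m) (hcpos _))
  refine ⟨hw, ?_⟩
  -- diagonal sum manipulations
  have hdnat : Summable fun m : ℕ => a (m:ℤ) * a (-(m:ℤ)) := by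
    rw [← summable_nat_add_iff 1]
    apply hw.congr
    intro m
    rw [← hcast m, haP m, haN m]
  have hdneg : Summable fun m : ℕ => a (-((m:ℤ) + 1)) * a (-(-((m:ℤ) + 1))) := by
    apply hw.congr
    intro m
    rw [neg_neg, haP m, haN m]
    ring
  have hSd : ∑' n : ℤ, a n * a (-n) = t₀ ^ 2
      + 2 * ∑' n : ℕ, ((n : ℂ) + 1) * tp (n + 1) * vp (n + 1) := by
    rw [tsum_of_nat_of_neg_add_one (f := fun n : ℤ => a n * a (-n)) hdnat hdneg,
      hdnat.tsum_eq_zero_add]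
    have e1 : ∑' m : ℕ, a ((m + 1 : ℕ):ℤ) * a (-((m + 1:ℕ):ℤ))
        = ∑' n : ℕ, ((n : ℂ) + 1) * tp (n + 1) * vp (n + 1) := by
      refine tsum_congr fun m => ?_
      rw [← hcast m, haP m, haN m]
    have e2 : ∑' m : ℕ, a (-((m:ℤ) + 1)) * a (-(-((m:ℤ) + 1)))
        = ∑' n : ℕ, ((n : ℂ) + 1) * tp (n + 1) * vp (n + 1) := by
      refine tsum_congr fun m => ?_
      rw [neg_neg, haP m, haN m]
      ring
    rw [e1, e2]
    simp only [Int.natCast_zero, neg_zero, ha0]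
    ring
  -- integrand identity
  have hint : ∀ θ : ℝ, (μ:ℂ) * g θ ^ (2 * μ - 1) * f θ ^ (-(2 * ν)) * deriv g θ
      = (μ:ℂ)⁻¹ * ((∑' n : ℤ, a n * g θ ^ n) ^ 2 * (deriv g θ / g θ)) := by
    intro θ
    rw [← hh θ, mul_pow, mul_pow]
    rw [show (g θ ^ μ) ^ 2 = g θ ^ (2 * μ) from by
      rw [sq, ← zpow_add₀ (hg0 θ)]; congr 1; ring]
    rw [show (f θ ^ (-ν)) ^ 2 = f θ ^ (-(2 * ν)) from by
      rw [sq, ← zpow_add₀ (hf0 θ)]; congr 1; ring]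
    rw [zpow_sub_one₀ (hg0 θ) (2 * μ), div_eq_mul_inv]
    field_simp
  have hIeq : ∫ θ in (0:ℝ)..(2 * Real.pi),
      (μ:ℂ) * g θ ^ (2 * μ - 1) * f θ ^ (-(2 * ν)) * deriv g θ
      = (μ:ℂ)⁻¹ * ((2 * Real.pi * Complex.I) * ∑' n : ℤ, a n * a (-n)) := by
    simp only [hint]
    rw [intervalIntegral.integral_const_mul,
      circle_key g hg hgper hg0 hwind a c hcsum ρ hρ0 (fun θ => (hρg θ).le) hac]
  rw [hIeq, hSd]
  field_simp
end

section
/- Let g, f : ℝ → ℂ∖{0} be C¹ and 2π-periodic, let μ, ν be nonzero integers, and suppose the winding numbers of g and of f about 0 both equal 1. Let t₀ ∈ ℂ and let (t_n)_{n≥1}, (v_n)_{n≥1}, (t_{−n})_{n≥1}, (v_{−n})_{n≥1} be sequences of complex numbers for which there exist R > max_θ|g(θ)|, 0 < ρ < min_θ|g(θ)|, 0 < σ < min_θ|f(θ)| and s > max_θ|f(θ)| with Σ n|t_n|R^{n} < ∞, Σ |v_n|ρ^{−n} < ∞, Σ n|t_{−n}|σ^{−n} < ∞ and Σ |v_{−n}|s^{n}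 < ∞, such that for all θ: μ·g^{μ}·f^{−ν} = Σ_{n≥1} n t_n g^{n} + t₀ + Σ_{n≥1} v_n g^{−n} and ν·g^{μ}·f^{−ν} = −Σ_{n≥1} n t_{−n} f^{−n} + t₀ − Σ_{n≥1} v_{−n} f^{n}. Then ν·( t₀² + 2 Σ_{n≥1} n t_n v_n ) = μ·( t₀² + 2 Σ_{n≥1} n t_{−n} v_{−n} ), both series converging absolutely. -/
open MeasureTheory intervalIntegral Set

lemma per_int_zero (F F' : ℝ → ℂ) (hF : ∀ θ, HasDerivAt F (F' θ) θ)
    (hF'c : Continuous F') (hper : F (2 * Real.pi) = F 0) :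
    ∫ θ in (0:ℝ)..(2 * Real.pi), F' θ = 0 := by
  rw [intervalIntegral.integral_eq_sub_of_hasDerivAt (fun θ _ => hF θ)
    (hF'c.intervalIntegrable _ _), hper, sub_self]

lemma curve_zpow_hasDerivAt (u : ℝ → ℂ) (hu : ContDiff ℝ 1 u) (hu0 : ∀ θ, u θ ≠ 0)
    (k : ℤ) (θ : ℝ) :
    HasDerivAt (fun t => u t ^ k) ((k : ℂ) * u θ ^ (k - 1) * deriv u θ) θ := by
  have hd : HasDerivAt u (deriv u θ) θ :=
    (hu.differentiable one_ne_zero θ).hasDerivAt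
  simpa [mul_assoc, Function.comp_def] using (hasDerivAt_zpow k (u θ) (Or.inl (hu0 θ))).comp θ hd

lemma circle_zpow_int (u : ℝ → ℂ) (hu : ContDiff ℝ 1 u)
    (hper : Function.Periodic u (2 * Real.pi)) (hu0 : ∀ θ, u θ ≠ 0)
    (k : ℤ) (hk : k ≠ -1) :
    ∫ θ in (0:ℝ)..(2 * Real.pi), u θ ^ k * deriv u θ = 0 := by
  have hk1 : (k : ℂ) + 1 ≠ 0 := by
    intro h
    have : ((k + 1 : ℤ) : ℂ) = 0 := by push_cast; linear_combination h
    have := Int.cast_injective (α := ℂ) (by simpa using this : ((k+1 : ℤ) : ℂ) = ((0:ℤ) : ℂ))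
    omega
  have hderiv : ∀ θ, HasDerivAt (fun t => ((k:ℂ)+1)⁻¹ * u t ^ (k+1))
      (u θ ^ k * deriv u θ) θ := by
    intro θ
    have := (curve_zpow_hasDerivAt u hu hu0 (k+1) θ).const_mul (((k:ℂ)+1)⁻¹)
    have e : ((k:ℂ)+1)⁻¹ * (((k+1 : ℤ) : ℂ) * u θ ^ (k + 1 - 1) * deriv u θ)
        = u θ ^ k * deriv u θ := by
      push_cast
      field_simp
      ring
    rw [e] at this
    exact this
  have hc : Continuous fun θ => u θ ^ k * deriv u θ :=
    ((hu.continuous.zpow₀ k (fun θ => Or.inl (hu0 θ))).mul (hu.continuous_deriv le_rfl))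
  have hu2 : u (2 * Real.pi) = u 0 := by simpa using hper 0
  exact per_int_zero _ _ hderiv hc (by simp [hu2])

lemma interchange (a : ℕ → ℝ → ℂ) (w : ℝ → ℂ) (M : ℕ → ℝ)
    (ha : ∀ n, Continuous (a n)) (hw : Continuous w) (hM : Summable M)
    (hb : ∀ n θ, ‖a n θ‖ ≤ M n) :
    ∫ θ in (0:ℝ)..(2 * Real.pi), (∑' n, a n θ) * w θ
      = ∑' n, ∫ θ in (0:ℝ)..(2 * Real.pi), a n θ * w θ := by
  have h2π : (0:ℝ) ≤ 2 * Real.pi := by positivity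
  obtain ⟨C, hC⟩ := (isCompact_Icc (a := (0:ℝ)) (b := 2*Real.pi)).exists_bound_of_continuousOn
    hw.continuousOn
  have hC0 : 0 ≤ C := le_trans (norm_nonneg _) (hC 0 (by constructor <;> [rfl; exact h2π]))
  have hint : ∀ n, Integrable (fun θ => a n θ * w θ)
      (volume.restrict (Set.Ioc (0:ℝ) (2*Real.pi))) := fun n =>
    ((ha n).mul hw).integrableOn_Ioc
  have key : ∀ n, ∫ θ in Set.Ioc (0:ℝ) (2*Real.pi), ‖a n θ * w θ‖ ≤ M n * C * (2*Real.pi) := by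
    intro n
    have h1 : ∫ θ in Set.Ioc (0:ℝ) (2*Real.pi), ‖a n θ * w θ‖
        ≤ ∫ _θ in Set.Ioc (0:ℝ) (2*Real.pi), M n * C := by
      apply setIntegral_mono_on (hint n).norm (integrableOn_const measure_Ioc_lt_top.ne) measurableSet_Ioc
      intro θ hθ
      rw [norm_mul]
      exact mul_le_mul (hb n θ) (hC θ (Set.Ioc_subset_Icc_self hθ)) (norm_nonneg _)
        (le_trans (norm_nonneg _) (hb n θ))
    have h2 : ∫ _θ in Set.Ioc (0:ℝ) (2*Real.pi), (M n * C) = M n * C * (2*Real.pi) := by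
      rw [setIntegral_const]
      simp [Real.volume_Ioc, ENNReal.toReal_ofReal h2π]
      rw [max_eq_left (by positivity)]; ring
    linarith [h1, h2.le, h2.ge]
  have hsum : Summable fun n => ∫ θ in Set.Ioc (0:ℝ) (2*Real.pi), ‖a n θ * w θ‖ := by
    apply Summable.of_nonneg_of_le (fun n => integral_nonneg (fun θ => norm_nonneg _)) key
    simpa [mul_assoc] using hM.mul_right (C * (2*Real.pi))
  rw [intervalIntegral.integral_of_le h2π]
  have := (integral_tsum_of_summable_integral_norm (μ := volume.restrict (Set.Ioc (0:ℝ) (2*Real.pi)))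
      (F := fun n θ => a n θ * w θ) hint hsum).symm
  rw [show (fun θ => (∑' n, a n θ) * w θ) = fun θ => ∑' n, a n θ * w θ by
      funext θ; exact (tsum_mul_right).symm] at *
  rw [this]
  exact tsum_congr fun n => (intervalIntegral.integral_of_le h2π).symm

/-- The nontrivial identity `2ν Σ n t_n v_n + ν t₀² = 2μ Σ n t_{-n} v_{-n} + μ t₀²`
obtained by integration by parts from the two Orlov–Schulman expansions
`μ g^μ f^{-ν} = Σ n t_n g^n + t₀ + Σ v_n g^{-n}` and
`ν g^μ f^{-ν} = -Σ n t_{-n} f^{-n} + t₀ - Σ v_{-n} f^n` on the unit circle, for curves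
`g, f` of winding number `1` about the origin. -/
theorem stmt_16
    (g f : ℝ → ℂ) (hg : ContDiff ℝ 1 g) (hf : ContDiff ℝ 1 f)
    (hgper : Function.Periodic g (2 * Real.pi))
    (hfper : Function.Periodic f (2 * Real.pi))
    (hg0 : ∀ θ : ℝ, g θ ≠ 0) (hf0 : ∀ θ : ℝ, f θ ≠ 0)
    (μ ν : ℤ) (hμ : μ ≠ 0) (hν : ν ≠ 0)
    (hgwind : (2 * Real.pi * Complex.I)⁻¹ *
      ∫ θ in (0:ℝ)..(2 * Real.pi), deriv g θ / g θ = 1)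
    (hfwind : (2 * Real.pi * Complex.I)⁻¹ *
      ∫ θ in (0:ℝ)..(2 * Real.pi), deriv f θ / f θ = 1)
    (t₀ : ℂ) (tp vp tm vm : ℕ → ℂ)
    (R ρ σ s : ℝ) (hρ0 : 0 < ρ) (hσ0 : 0 < σ)
    (hρg : ∀ θ : ℝ, ρ < ‖g θ‖)
    (hgR : ∀ θ : ℝ, ‖g θ‖ < R)
    (hσf : ∀ θ : ℝ, σ < ‖f θ‖)
    (hfs : ∀ θ : ℝ, ‖f θ‖ < s)
    (htpsum : Summable fun n : ℕ => (n + 1 : ℝ) * ‖tp (n + 1)‖ * R ^ (n + 1))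
    (hvpsum : Summable fun n : ℕ => ‖vp (n + 1)‖ * ρ ^ (-(n + 1 : ℤ)))
    (htmsum : Summable fun n : ℕ => (n + 1 : ℝ) * ‖tm (n + 1)‖ * σ ^ (-(n + 1 : ℤ)))
    (hvmsum : Summable fun n : ℕ => ‖vm (n + 1)‖ * s ^ (n + 1))
    (hexp₁ : ∀ θ : ℝ,
      (μ : ℂ) * g θ ^ μ * f θ ^ (-ν)
        = (∑' n : ℕ, ((n : ℂ) + 1) * tp (n + 1) * g θ ^ (n + 1)) + t₀
          + ∑' n : ℕ, vp (n + 1) * g θ ^ (-(n + 1 : ℤ)))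
    (hexp₂ : ∀ θ : ℝ,
      (ν : ℂ) * g θ ^ μ * f θ ^ (-ν)
        = -(∑' n : ℕ, ((n : ℂ) + 1) * tm (n + 1) * f θ ^ (-(n + 1 : ℤ))) + t₀
          - ∑' n : ℕ, vm (n + 1) * f θ ^ (n + 1)) :
    Summable (fun n : ℕ => ((n : ℂ) + 1) * tp (n + 1) * vp (n + 1)) ∧
    Summable (fun n : ℕ => ((n : ℂ) + 1) * tm (n + 1) * vm (n + 1)) ∧
    (ν : ℂ) * (t₀ ^ 2 + 2 * ∑' n : ℕ, ((n : ℂ) + 1) * tp (n + 1) * vp (n + 1))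
      = (μ : ℂ) * (t₀ ^ 2 + 2 * ∑' n : ℕ, ((n : ℂ) + 1) * tm (n + 1) * vm (n + 1)) := by
  -- positivity facts
  have hR0 : 0 < R := lt_trans (lt_trans hρ0 (hρg 0)) (hgR 0)
  have hs0 : 0 < s := lt_trans (lt_trans hσ0 (hσf 0)) (hfs 0)
  have hρR : ρ ≤ R := le_of_lt (lt_trans (hρg 0) (hgR 0))
  have hσs : σ ≤ s := le_of_lt (lt_trans (hσf 0) (hfs 0))
  -- Step A : summability
  have Sp : Summable (fun n : ℕ => ((n : ℂ) + 1) * tp (n + 1) * vp (n + 1)) := by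
    set C := ∑' n : ℕ, ‖vp (n + 1)‖ * ρ ^ (-(n + 1 : ℤ)) with hC
    have hCle : ∀ n : ℕ, ‖vp (n + 1)‖ * ρ ^ (-(n + 1 : ℤ)) ≤ C :=
      fun n => hvpsum.le_tsum n (fun m _ => by positivity)
    have hvle : ∀ n : ℕ, ‖vp (n+1)‖ ≤ C * ρ ^ (n+1) := by
      intro n
      have h1 : (0:ℝ) < ρ ^ (n+1) := pow_pos hρ0 _
      have := hCle n
      rw [zpow_neg, show ((n:ℤ)+1) = ((n+1:ℕ):ℤ) by push_cast; ring, zpow_natCast] at this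
      calc ‖vp (n+1)‖
          = ‖vp (n+1)‖ * (ρ^(n+1))⁻¹ * ρ^(n+1) := by field_simp
        _ ≤ C * ρ ^ (n+1) := by
            apply mul_le_mul_of_nonneg_right this h1.le
    apply Summable.of_norm_bounded
      (g := fun n : ℕ => C * ((n + 1 : ℝ) * ‖tp (n + 1)‖ * R ^ (n + 1)))
      (htpsum.mul_left C)
    intro n
    have hC0 : 0 ≤ C := le_trans (by positivity) (hCle 0)
    rw [norm_mul, norm_mul,
      show ((n:ℂ)+1) = ((n+1:ℕ):ℂ) by push_cast; ring]
    rw [show ‖((n+1:ℕ):ℂ)‖ = ((n:ℝ)+1) by rw [Complex.norm_natCast]; push_cast; ring]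
    calc ((n:ℝ)+1) * ‖tp (n+1)‖ * ‖vp (n+1)‖
        ≤ ((n:ℝ)+1) * ‖tp (n+1)‖ * (C * ρ ^ (n+1)) := by
          apply mul_le_mul_of_nonneg_left (hvle n) (by positivity)
      _ ≤ ((n:ℝ)+1) * ‖tp (n+1)‖ * (C * R ^ (n+1)) := by
          apply mul_le_mul_of_nonneg_left _ (by positivity)
          exact mul_le_mul_of_nonneg_left (pow_le_pow_left₀ hρ0.le hρR _) hC0
      _ = C * (((n:ℝ)+1) * ‖tp (n+1)‖ * R ^ (n+1)) := by ring
  have Sm : Summable (fun n : ℕ => ((n : ℂ) + 1) * tm (n + 1) * vm (n + 1)) := by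
    set C := ∑' n : ℕ, ‖vm (n + 1)‖ * s ^ (n + 1) with hC
    have hCle : ∀ n : ℕ, ‖vm (n + 1)‖ * s ^ (n + 1) ≤ C :=
      fun n => hvmsum.le_tsum n (fun m _ => by positivity)
    have hC0 : 0 ≤ C := le_trans (by positivity) (hCle 0)
    have hvle : ∀ n : ℕ, ‖vm (n+1)‖ ≤ C * σ ^ (-(n + 1:ℤ)) := by
      intro n
      have h1 : (0:ℝ) < s ^ (n+1) := pow_pos hs0 _
      have h2 : ‖vm (n+1)‖ ≤ C * (s^(n+1))⁻¹ := by
        calc ‖vm (n+1)‖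
            = ‖vm (n+1)‖ * s^(n+1) * (s^(n+1))⁻¹ := by field_simp
          _ ≤ C * (s^(n+1))⁻¹ := mul_le_mul_of_nonneg_right (hCle n) (by positivity)
      refine le_trans h2 ?_
      rw [zpow_neg, show ((n:ℤ)+1) = ((n+1:ℕ):ℤ) by push_cast; ring, zpow_natCast]
      exact mul_le_mul_of_nonneg_left
        (inv_anti₀ (pow_pos hσ0 _) (pow_le_pow_left₀ hσ0.le hσs _)) hC0
    apply Summable.of_norm_bounded
      (g := fun n : ℕ => C * ((n + 1 : ℝ) * ‖tm (n + 1)‖ * σ ^ (-(n + 1:ℤ))))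
      (htmsum.mul_left C)
    intro n
    rw [norm_mul, norm_mul,
      show ((n:ℂ)+1) = ((n+1:ℕ):ℂ) by push_cast; ring]
    rw [show ‖((n+1:ℕ):ℂ)‖ = ((n:ℝ)+1) by rw [Complex.norm_natCast]; push_cast; ring]
    calc ((n:ℝ)+1) * ‖tm (n+1)‖ * ‖vm (n+1)‖
        ≤ ((n:ℝ)+1) * ‖tm (n+1)‖ * (C * σ ^ (-(n+1:ℤ))) := by
          apply mul_le_mul_of_nonneg_left (hvle n) (by positivity)
      _ = C * (((n:ℝ)+1) * ‖tm (n+1)‖ * σ ^ (-(n+1:ℤ))) := by ring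
  refine ⟨Sp, Sm, ?_⟩
  -- continuity basics
  have hgc := hg.continuous
  have hfc := hf.continuous
  have hg'c : Continuous (deriv g) := hg.continuous_deriv le_rfl
  have hf'c : Continuous (deriv f) := hf.continuous_deriv le_rfl
  have hgz : ∀ k : ℤ, Continuous fun θ => g θ ^ k :=
    fun k => hgc.zpow₀ k (fun θ => Or.inl (hg0 θ))
  have hfz : ∀ k : ℤ, Continuous fun θ => f θ ^ k :=
    fun k => hfc.zpow₀ k (fun θ => Or.inl (hf0 θ))
  have hMc : Continuous fun θ => (μ:ℂ) * g θ ^ μ * f θ ^ (-ν) :=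
    (continuous_const.mul (hgz μ)).mul (hfz (-ν))
  have hNc : Continuous fun θ => (ν:ℂ) * g θ ^ μ * f θ ^ (-ν) :=
    (continuous_const.mul (hgz μ)).mul (hfz (-ν))
  have h2πi : (2 * (Real.pi:ℂ) * Complex.I) ≠ 0 :=
    mul_ne_zero (mul_ne_zero two_ne_zero (Complex.ofReal_ne_zero.mpr Real.pi_ne_zero))
      Complex.I_ne_zero
  -- the two basic contour integrals
  have Gval : ∀ k : ℤ, (∫ θ in (0:ℝ)..(2*Real.pi), g θ ^ k * deriv g θ)
      = if k = -1 then 2*(Real.pi:ℂ)*Complex.I else 0 := by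
    intro k
    by_cases hk : k = -1
    · subst hk
      rw [if_pos rfl]
      have e : ∀ θ, g θ ^ (-1:ℤ) * deriv g θ = deriv g θ / g θ := by
        intro θ; rw [zpow_neg_one, div_eq_mul_inv, mul_comm]
      simp only [e]
      exact ((inv_mul_eq_one₀ h2πi).mp hgwind).symm
    · rw [if_neg hk]; exact circle_zpow_int g hg hgper hg0 k hk
  have Fval : ∀ k : ℤ, (∫ θ in (0:ℝ)..(2*Real.pi), f θ ^ k * deriv f θ)
      = if k = -1 then 2*(Real.pi:ℂ)*Complex.I else 0 := by
    intro k
    by_cases hk : k = -1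
    · subst hk
      rw [if_pos rfl]
      have e : ∀ θ, f θ ^ (-1:ℤ) * deriv f θ = deriv f θ / f θ := by
        intro θ; rw [zpow_neg_one, div_eq_mul_inv, mul_comm]
      simp only [e]
      exact ((inv_mul_eq_one₀ h2πi).mp hfwind).symm
    · rw [if_neg hk]; exact circle_zpow_int f hf hfper hf0 k hk
  -- uniform bounds for the series
  have hgRb : ∀ (n : ℕ) (θ : ℝ), ‖((n:ℂ)+1) * tp (n+1) * g θ ^ (n+1)‖
      ≤ (n+1:ℝ) * ‖tp (n+1)‖ * R^(n+1) := by
    intro n θ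
    rw [norm_mul, norm_mul, norm_pow, show ((n:ℂ)+1) = ((n+1:ℕ):ℂ) by push_cast; ring]
    simp only [Complex.norm_natCast]
    push_cast
    exact mul_le_mul_of_nonneg_left
      (pow_le_pow_left₀ (norm_nonneg _) (hgR θ).le _) (by positivity)
  have hgρb : ∀ (n : ℕ) (θ : ℝ), ‖vp (n+1) * g θ ^ (-(n+1:ℤ))‖
      ≤ ‖vp (n+1)‖ * ρ ^ (-(n+1:ℤ)) := by
    intro n θ
    rw [norm_mul, norm_zpow]
    apply mul_le_mul_of_nonneg_left _ (norm_nonneg _)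
    rw [zpow_neg, zpow_neg, show ((n:ℤ)+1) = ((n+1:ℕ):ℤ) by push_cast; ring,
      zpow_natCast, zpow_natCast]
    exact inv_anti₀ (pow_pos hρ0 _) (pow_le_pow_left₀ hρ0.le (hρg θ).le _)
  have hfσb : ∀ (n : ℕ) (θ : ℝ), ‖-(((n:ℂ)+1) * tm (n+1)) * f θ ^ (-(n+1:ℤ))‖
      ≤ (n+1:ℝ) * ‖tm (n+1)‖ * σ ^ (-(n+1:ℤ)) := by
    intro n θ
    rw [norm_mul, norm_neg, norm_mul, norm_zpow,
      show ((n:ℂ)+1) = ((n+1:ℕ):ℂ) by push_cast; ring, Complex.norm_natCast]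
    push_cast
    apply mul_le_mul_of_nonneg_left _ (by positivity)
    rw [zpow_neg, zpow_neg, show ((n:ℤ)+1) = ((n+1:ℕ):ℤ) by push_cast; ring,
      zpow_natCast, zpow_natCast]
    exact inv_anti₀ (pow_pos hσ0 _) (pow_le_pow_left₀ hσ0.le (hσf θ).le _)
  have hfsb : ∀ (n : ℕ) (θ : ℝ), ‖-(vm (n+1)) * f θ ^ (n+1)‖
      ≤ ‖vm (n+1)‖ * s^(n+1) := by
    intro n θ
    rw [norm_mul, norm_neg, norm_pow]
    exact mul_le_mul_of_nonneg_left
      (pow_le_pow_left₀ (norm_nonneg _) (hfs θ).le _) (norm_nonneg _)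
  -- continuity of the partial sums
  have hPc : Continuous (fun θ => ∑' n : ℕ, ((n:ℂ)+1) * tp (n+1) * g θ ^ (n+1)) :=
    continuous_tsum (fun n => continuous_const.mul (hgc.pow (n+1))) htpsum hgRb
  have hQc : Continuous (fun θ => ∑' n : ℕ, vp (n+1) * g θ ^ (-(n+1:ℤ))) :=
    continuous_tsum (fun n => continuous_const.mul (hgz (-(n+1:ℤ)))) hvpsum hgρb
  have hPmc : Continuous (fun θ => ∑' n : ℕ, -(((n:ℂ)+1) * tm (n+1)) * f θ ^ (-(n+1:ℤ))) :=
    continuous_tsum (fun n => continuous_const.mul (hfz (-(n+1:ℤ)))) htmsum hfσb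
  have hQmc : Continuous (fun θ => ∑' n : ℕ, -(vm (n+1)) * f θ ^ (n+1)) :=
    continuous_tsum (fun n => continuous_const.mul (hfc.pow (n+1))) hvmsum hfsb
  -- expansion of ∫ (μ g^μ f^{-ν}) w
  have expand₁ : ∀ w : ℝ → ℂ, Continuous w →
      (∫ θ in (0:ℝ)..(2*Real.pi), ((μ:ℂ) * g θ ^ μ * f θ ^ (-ν)) * w θ)
      = (∑' n : ℕ, ((n:ℂ)+1) * tp (n+1) * ∫ θ in (0:ℝ)..(2*Real.pi), g θ ^ (n+1) * w θ)
        + t₀ * (∫ θ in (0:ℝ)..(2*Real.pi), w θ)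
        + ∑' n : ℕ, vp (n+1) * ∫ θ in (0:ℝ)..(2*Real.pi), g θ ^ (-(n+1:ℤ)) * w θ := by
    intro w hw
    have e : (fun θ => ((μ:ℂ) * g θ ^ μ * f θ ^ (-ν)) * w θ)
        = fun θ => ((∑' n : ℕ, ((n:ℂ)+1)*tp (n+1)*g θ^(n+1)) * w θ + t₀ * w θ)
          + (∑' n : ℕ, vp (n+1) * g θ ^ (-(n+1:ℤ))) * w θ := by
      funext θ; rw [hexp₁ θ]; ring
    rw [e]
    rw [intervalIntegral.integral_add
        (((hPc.fun_mul hw).fun_add (continuous_const.fun_mul hw)).intervalIntegrable _ _)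
        ((hQc.fun_mul hw).intervalIntegrable _ _),
      intervalIntegral.integral_add ((hPc.fun_mul hw).intervalIntegrable _ _)
        ((continuous_const.fun_mul hw).intervalIntegrable _ _)]
    rw [interchange _ w _ (fun n => continuous_const.fun_mul (hgc.fun_pow (n+1))) hw htpsum hgRb,
      interchange _ w _ (fun n => continuous_const.fun_mul (hgz (-(n+1:ℤ)))) hw hvpsum hgρb,
      intervalIntegral.integral_const_mul]
    congr 1
    congr 1
    · refine tsum_congr fun n => ?_
      rw [intervalIntegral.integral_congr
        (g := fun θ => (((n:ℂ)+1)*tp (n+1)) * (g θ^(n+1) * w θ)) (fun θ _ => by ring),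
        intervalIntegral.integral_const_mul, mul_assoc]
    · refine tsum_congr fun n => ?_
      rw [intervalIntegral.integral_congr
        (g := fun θ => (vp (n+1)) * (g θ^(-(n+1:ℤ)) * w θ)) (fun θ _ => by ring),
        intervalIntegral.integral_const_mul]
  -- expansion of ∫ (ν g^μ f^{-ν}) w
  have expand₂ : ∀ w : ℝ → ℂ, Continuous w →
      (∫ θ in (0:ℝ)..(2*Real.pi), ((ν:ℂ) * g θ ^ μ * f θ ^ (-ν)) * w θ)
      = (∑' n : ℕ, -(((n:ℂ)+1) * tm (n+1)) * ∫ θ in (0:ℝ)..(2*Real.pi), f θ ^ (-(n+1:ℤ)) * w θ)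
        + t₀ * (∫ θ in (0:ℝ)..(2*Real.pi), w θ)
        + ∑' n : ℕ, -(vm (n+1)) * ∫ θ in (0:ℝ)..(2*Real.pi), f θ ^ (n+1) * w θ := by
    intro w hw
    have e : (fun θ => ((ν:ℂ) * g θ ^ μ * f θ ^ (-ν)) * w θ)
        = fun θ => ((∑' n : ℕ, -(((n:ℂ)+1)*tm (n+1))*f θ^(-(n+1:ℤ))) * w θ + t₀ * w θ)
          + (∑' n : ℕ, -(vm (n+1)) * f θ ^ (n+1)) * w θ := by
      funext θ
      rw [hexp₂ θ]
      rw [show (fun n : ℕ => -(((n:ℂ)+1)*tm (n+1))*f θ^(-(n+1:ℤ)))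
          = fun n : ℕ => -(((n:ℂ)+1)*tm (n+1)*f θ^(-(n+1:ℤ))) from funext fun n => by ring,
        tsum_neg]
      rw [show (fun n : ℕ => -(vm (n+1)) * f θ ^ (n+1))
          = fun n : ℕ => -(vm (n+1) * f θ ^ (n+1)) from funext fun n => by ring,
        tsum_neg]
      ring
    rw [e]
    rw [intervalIntegral.integral_add
        (((hPmc.fun_mul hw).fun_add (continuous_const.fun_mul hw)).intervalIntegrable _ _)
        ((hQmc.fun_mul hw).intervalIntegrable _ _),
      intervalIntegral.integral_add ((hPmc.fun_mul hw).intervalIntegrable _ _)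
        ((continuous_const.fun_mul hw).intervalIntegrable _ _)]
    rw [interchange _ w _ (fun n => continuous_const.fun_mul (hfz (-(n+1:ℤ)))) hw htmsum hfσb,
      interchange _ w _ (fun n => continuous_const.fun_mul (hfc.fun_pow (n+1))) hw hvmsum hfsb,
      intervalIntegral.integral_const_mul]
    congr 1
    congr 1
    · refine tsum_congr fun n => ?_
      rw [intervalIntegral.integral_congr
        (g := fun θ => (-(((n:ℂ)+1)*tm (n+1))) * (f θ^(-(n+1:ℤ)) * w θ)) (fun θ _ => by ring),
        intervalIntegral.integral_const_mul]
    · refine tsum_congr fun n => ?_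
      rw [intervalIntegral.integral_congr
        (g := fun θ => (-(vm (n+1))) * (f θ^(n+1) * w θ)) (fun θ _ => by ring),
        intervalIntegral.integral_const_mul]
  -- evaluation of ∫ (μ h) g^k g'
  have IGgen : ∀ k : ℤ,
      (∫ θ in (0:ℝ)..(2*Real.pi), ((μ:ℂ) * g θ ^ μ * f θ ^ (-ν)) * (g θ ^ k * deriv g θ))
      = (∑' m : ℕ, ((m:ℂ)+1) * tp (m+1)
            * (if ((m:ℤ)+1) + k = -1 then 2*(Real.pi:ℂ)*Complex.I else 0))
        + t₀ * (if k = -1 then 2*(Real.pi:ℂ)*Complex.I else 0)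
        + ∑' m : ℕ, vp (m+1)
            * (if (-((m:ℤ)+1)) + k = -1 then 2*(Real.pi:ℂ)*Complex.I else 0) := by
    intro k
    rw [expand₁ _ ((hgz k).fun_mul hg'c)]
    congr 1
    congr 1
    · refine tsum_congr fun m => ?_
      congr 1
      have e : ∀ θ, g θ ^ (m+1) * (g θ ^ k * deriv g θ)
          = g θ ^ (((m:ℤ)+1) + k) * deriv g θ := by
        intro θ
        rw [show g θ ^ (m+1) = g θ ^ ((m+1:ℕ):ℤ) from (zpow_natCast _ _).symm,
          ← mul_assoc, ← zpow_add₀ (hg0 θ)]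
        norm_num
      rw [intervalIntegral.integral_congr (fun θ _ => e θ), Gval]
    · congr 1
      exact Gval k
    · refine tsum_congr fun m => ?_
      congr 1
      have e : ∀ θ, g θ ^ (-((m:ℤ)+1)) * (g θ ^ k * deriv g θ)
          = g θ ^ ((-((m:ℤ)+1)) + k) * deriv g θ := by
        intro θ
        rw [← mul_assoc, ← zpow_add₀ (hg0 θ)]
      rw [intervalIntegral.integral_congr (fun θ _ => e θ), Gval]
  have IFgen : ∀ k : ℤ,
      (∫ θ in (0:ℝ)..(2*Real.pi), ((ν:ℂ) * g θ ^ μ * f θ ^ (-ν)) * (f θ ^ k * deriv f θ))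
      = (∑' m : ℕ, -(((m:ℂ)+1) * tm (m+1))
            * (if (-((m:ℤ)+1)) + k = -1 then 2*(Real.pi:ℂ)*Complex.I else 0))
        + t₀ * (if k = -1 then 2*(Real.pi:ℂ)*Complex.I else 0)
        + ∑' m : ℕ, -(vm (m+1))
            * (if ((m:ℤ)+1) + k = -1 then 2*(Real.pi:ℂ)*Complex.I else 0) := by
    intro k
    rw [expand₂ _ ((hfz k).fun_mul hf'c)]
    congr 1
    congr 1
    · refine tsum_congr fun m => ?_
      congr 1
      have e : ∀ θ, f θ ^ (-((m:ℤ)+1)) * (f θ ^ k * deriv f θ)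
          = f θ ^ ((-((m:ℤ)+1)) + k) * deriv f θ := by
        intro θ
        rw [← mul_assoc, ← zpow_add₀ (hf0 θ)]
      rw [intervalIntegral.integral_congr (fun θ _ => e θ), Fval]
    · congr 1
      exact Fval k
    · refine tsum_congr fun m => ?_
      congr 1
      have e : ∀ θ, f θ ^ (m+1) * (f θ ^ k * deriv f θ)
          = f θ ^ (((m:ℤ)+1) + k) * deriv f θ := by
        intro θ
        rw [show f θ ^ (m+1) = f θ ^ ((m+1:ℕ):ℤ) from (zpow_natCast _ _).symm,
          ← mul_assoc, ← zpow_add₀ (hf0 θ)]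
        norm_num
      rw [intervalIntegral.integral_congr (fun θ _ => e θ), Fval]
  -- specific values
  have IGn : ∀ n : ℕ,
      (∫ θ in (0:ℝ)..(2*Real.pi), ((μ:ℂ) * g θ ^ μ * f θ ^ (-ν)) * (g θ ^ (n:ℤ) * deriv g θ))
      = 2*(Real.pi:ℂ)*Complex.I * vp (n+1) := by
    intro n
    rw [IGgen (n:ℤ)]
    rw [show (fun m : ℕ => ((m:ℂ)+1) * tp (m+1)
        * (if ((m:ℤ)+1) + (n:ℤ) = -1 then 2*(Real.pi:ℂ)*Complex.I else 0)) = fun _ => 0 from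
      funext fun m => by rw [if_neg (by omega), mul_zero]]
    rw [tsum_zero, if_neg (by omega),
      tsum_eq_single n (fun m hm => by rw [if_neg (by omega), mul_zero]),
      if_pos (by omega)]
    ring
  have IGm1 :
      (∫ θ in (0:ℝ)..(2*Real.pi), ((μ:ℂ) * g θ ^ μ * f θ ^ (-ν)) * (g θ ^ (-1:ℤ) * deriv g θ))
      = 2*(Real.pi:ℂ)*Complex.I * t₀ := by
    rw [IGgen (-1)]
    rw [show (fun m : ℕ => ((m:ℂ)+1) * tp (m+1)
        * (if ((m:ℤ)+1) + (-1:ℤ) = -1 then 2*(Real.pi:ℂ)*Complex.I else 0)) = fun _ => 0 from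
      funext fun m => by rw [if_neg (by omega), mul_zero]]
    rw [show (fun m : ℕ => vp (m+1)
        * (if (-((m:ℤ)+1)) + (-1:ℤ) = -1 then 2*(Real.pi:ℂ)*Complex.I else 0)) = fun _ => 0 from
      funext fun m => by rw [if_neg (by omega), mul_zero]]
    rw [tsum_zero, if_pos rfl]
    ring
  have IGneg : ∀ n : ℕ,
      (∫ θ in (0:ℝ)..(2*Real.pi), ((μ:ℂ) * g θ ^ μ * f θ ^ (-ν)) * (g θ ^ (-((n:ℤ)+1) + -1) * deriv g θ))
      = 2*(Real.pi:ℂ)*Complex.I * (((n:ℂ)+1) * tp (n+1)) := by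
    intro n
    rw [IGgen (-((n:ℤ)+1) + -1)]
    rw [show (fun m : ℕ => vp (m+1)
        * (if (-((m:ℤ)+1)) + (-((n:ℤ)+1) + -1) = -1 then 2*(Real.pi:ℂ)*Complex.I else 0))
        = fun _ => 0 from
      funext fun m => by rw [if_neg (by omega), mul_zero]]
    rw [tsum_zero, if_neg (by omega),
      tsum_eq_single n (fun m hm => by rw [if_neg (by omega), mul_zero]),
      if_pos (by omega)]
    ring
  have IFn : ∀ n : ℕ,
      (∫ θ in (0:ℝ)..(2*Real.pi), ((ν:ℂ) * g θ ^ μ * f θ ^ (-ν)) * (f θ ^ (n:ℤ) * deriv f θ))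
      = -(2*(Real.pi:ℂ)*Complex.I * (((n:ℂ)+1) * tm (n+1))) := by
    intro n
    rw [IFgen (n:ℤ)]
    rw [show (fun m : ℕ => -(vm (m+1))
        * (if ((m:ℤ)+1) + (n:ℤ) = -1 then 2*(Real.pi:ℂ)*Complex.I else 0)) = fun _ => 0 from
      funext fun m => by rw [if_neg (by omega), mul_zero]]
    rw [tsum_zero, if_neg (by omega),
      tsum_eq_single n (fun m hm => by rw [if_neg (by omega), mul_zero]),
      if_pos (by omega)]
    ring
  have IFm1 :
      (∫ θ in (0:ℝ)..(2*Real.pi), ((ν:ℂ) * g θ ^ μ * f θ ^ (-ν)) * (f θ ^ (-1:ℤ) * deriv f θ))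
      = 2*(Real.pi:ℂ)*Complex.I * t₀ := by
    rw [IFgen (-1)]
    rw [show (fun m : ℕ => -(((m:ℂ)+1) * tm (m+1))
        * (if (-((m:ℤ)+1)) + (-1:ℤ) = -1 then 2*(Real.pi:ℂ)*Complex.I else 0)) = fun _ => 0 from
      funext fun m => by rw [if_neg (by omega), mul_zero]]
    rw [show (fun m : ℕ => -(vm (m+1))
        * (if ((m:ℤ)+1) + (-1:ℤ) = -1 then 2*(Real.pi:ℂ)*Complex.I else 0)) = fun _ => 0 from
      funext fun m => by rw [if_neg (by omega), mul_zero]]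
    rw [tsum_zero, if_pos rfl]
    ring
  have IFneg : ∀ n : ℕ,
      (∫ θ in (0:ℝ)..(2*Real.pi), ((ν:ℂ) * g θ ^ μ * f θ ^ (-ν)) * (f θ ^ (-((n:ℤ)+1) + -1) * deriv f θ))
      = -(2*(Real.pi:ℂ)*Complex.I * vm (n+1)) := by
    intro n
    rw [IFgen (-((n:ℤ)+1) + -1)]
    rw [show (fun m : ℕ => -(((m:ℂ)+1) * tm (m+1))
        * (if (-((m:ℤ)+1)) + (-((n:ℤ)+1) + -1) = -1 then 2*(Real.pi:ℂ)*Complex.I else 0))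
        = fun _ => 0 from
      funext fun m => by rw [if_neg (by omega), mul_zero]]
    rw [tsum_zero, if_neg (by omega),
      tsum_eq_single n (fun m hm => by rw [if_neg (by omega), mul_zero]),
      if_pos (by omega)]
    ring
  -- the two quadratic contour integrals
  have hX : (∫ θ in (0:ℝ)..(2*Real.pi), ((μ:ℂ) * g θ ^ μ * f θ ^ (-ν))
        * (((μ:ℂ) * g θ ^ μ * f θ ^ (-ν)) * (g θ ^ (-1:ℤ) * deriv g θ)))
      = 2*(Real.pi:ℂ)*Complex.I
        * (t₀^2 + 2 * ∑' n : ℕ, ((n:ℂ)+1) * tp (n+1) * vp (n+1)) := by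
    rw [expand₁ _ (hMc.fun_mul ((hgz (-1)).fun_mul hg'c))]
    have e1 : ∀ n : ℕ, (∫ θ in (0:ℝ)..(2*Real.pi), g θ ^ (n+1)
        * (((μ:ℂ) * g θ ^ μ * f θ ^ (-ν)) * (g θ ^ (-1:ℤ) * deriv g θ)))
        = 2*(Real.pi:ℂ)*Complex.I * vp (n+1) := by
      intro n
      rw [intervalIntegral.integral_congr (g := fun θ =>
        ((μ:ℂ) * g θ ^ μ * f θ ^ (-ν)) * (g θ ^ (n:ℤ) * deriv g θ)) (fun θ _ => by
          have h1 : g θ ^ (n:ℤ) = g θ ^ (n+1) * g θ ^ (-1:ℤ) := by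
            rw [show g θ ^ (n+1) = g θ ^ ((n+1:ℕ):ℤ) from (zpow_natCast _ _).symm,
              ← zpow_add₀ (hg0 θ)]
            norm_num
          show _ = _
          simp only []
          rw [h1]; ring)]
      exact IGn n
    have e3 : ∀ n : ℕ, (∫ θ in (0:ℝ)..(2*Real.pi), g θ ^ (-((n:ℤ)+1))
        * (((μ:ℂ) * g θ ^ μ * f θ ^ (-ν)) * (g θ ^ (-1:ℤ) * deriv g θ)))
        = 2*(Real.pi:ℂ)*Complex.I * (((n:ℂ)+1) * tp (n+1)) := by
      intro n
      rw [intervalIntegral.integral_congr (g := fun θ =>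
        ((μ:ℂ) * g θ ^ μ * f θ ^ (-ν)) * (g θ ^ (-((n:ℤ)+1) + -1) * deriv g θ)) (fun θ _ => by
          show _ = _
          simp only []
          rw [zpow_add₀ (hg0 θ)]; ring)]
      exact IGneg n
    rw [show (fun n : ℕ => ((n:ℂ)+1) * tp (n+1) * ∫ θ in (0:ℝ)..(2*Real.pi), g θ ^ (n+1)
        * (((μ:ℂ) * g θ ^ μ * f θ ^ (-ν)) * (g θ ^ (-1:ℤ) * deriv g θ)))
        = fun n : ℕ => 2*(Real.pi:ℂ)*Complex.I * (((n:ℂ)+1) * tp (n+1) * vp (n+1)) from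
      funext fun n => by rw [e1 n]; ring]
    rw [show (fun n : ℕ => vp (n+1) * ∫ θ in (0:ℝ)..(2*Real.pi), g θ ^ (-((n:ℤ)+1))
        * (((μ:ℂ) * g θ ^ μ * f θ ^ (-ν)) * (g θ ^ (-1:ℤ) * deriv g θ)))
        = fun n : ℕ => 2*(Real.pi:ℂ)*Complex.I * (((n:ℂ)+1) * tp (n+1) * vp (n+1)) from
      funext fun n => by rw [e3 n]; ring]
    rw [IGm1, tsum_mul_left]
    ring
  have hY : (∫ θ in (0:ℝ)..(2*Real.pi), ((ν:ℂ) * g θ ^ μ * f θ ^ (-ν))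
        * (((ν:ℂ) * g θ ^ μ * f θ ^ (-ν)) * (f θ ^ (-1:ℤ) * deriv f θ)))
      = 2*(Real.pi:ℂ)*Complex.I
        * (t₀^2 + 2 * ∑' n : ℕ, ((n:ℂ)+1) * tm (n+1) * vm (n+1)) := by
    rw [expand₂ _ (hNc.fun_mul ((hfz (-1)).fun_mul hf'c))]
    have e1 : ∀ n : ℕ, (∫ θ in (0:ℝ)..(2*Real.pi), f θ ^ (-((n:ℤ)+1))
        * (((ν:ℂ) * g θ ^ μ * f θ ^ (-ν)) * (f θ ^ (-1:ℤ) * deriv f θ)))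
        = -(2*(Real.pi:ℂ)*Complex.I * vm (n+1)) := by
      intro n
      rw [intervalIntegral.integral_congr (g := fun θ =>
        ((ν:ℂ) * g θ ^ μ * f θ ^ (-ν)) * (f θ ^ (-((n:ℤ)+1) + -1) * deriv f θ)) (fun θ _ => by
          show _ = _
          simp only []
          rw [zpow_add₀ (hf0 θ)]; ring)]
      exact IFneg n
    have e3 : ∀ n : ℕ, (∫ θ in (0:ℝ)..(2*Real.pi), f θ ^ (n+1)
        * (((ν:ℂ) * g θ ^ μ * f θ ^ (-ν)) * (f θ ^ (-1:ℤ) * deriv f θ)))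
        = -(2*(Real.pi:ℂ)*Complex.I * (((n:ℂ)+1) * tm (n+1))) := by
      intro n
      rw [intervalIntegral.integral_congr (g := fun θ =>
        ((ν:ℂ) * g θ ^ μ * f θ ^ (-ν)) * (f θ ^ (n:ℤ) * deriv f θ)) (fun θ _ => by
          have h1 : f θ ^ (n:ℤ) = f θ ^ (n+1) * f θ ^ (-1:ℤ) := by
            rw [show f θ ^ (n+1) = f θ ^ ((n+1:ℕ):ℤ) from (zpow_natCast _ _).symm,
              ← zpow_add₀ (hf0 θ)]
            norm_num
          show _ = _
          simp only []
          rw [h1]; ring)]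
      exact IFn n
    rw [show (fun n : ℕ => -(((n:ℂ)+1) * tm (n+1)) * ∫ θ in (0:ℝ)..(2*Real.pi), f θ ^ (-((n:ℤ)+1))
        * (((ν:ℂ) * g θ ^ μ * f θ ^ (-ν)) * (f θ ^ (-1:ℤ) * deriv f θ)))
        = fun n : ℕ => 2*(Real.pi:ℂ)*Complex.I * (((n:ℂ)+1) * tm (n+1) * vm (n+1)) from
      funext fun n => by rw [e1 n]; ring]
    rw [show (fun n : ℕ => -(vm (n+1)) * ∫ θ in (0:ℝ)..(2*Real.pi), f θ ^ (n+1)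
        * (((ν:ℂ) * g θ ^ μ * f θ ^ (-ν)) * (f θ ^ (-1:ℤ) * deriv f θ)))
        = fun n : ℕ => 2*(Real.pi:ℂ)*Complex.I * (((n:ℂ)+1) * tm (n+1) * vm (n+1)) from
      funext fun n => by rw [e3 n]; ring]
    rw [IFm1, tsum_mul_left]
    ring
  -- integration by parts : ν X = μ Y
  have hXc : Continuous fun θ => ((μ:ℂ) * g θ ^ μ * f θ ^ (-ν))
      * (((μ:ℂ) * g θ ^ μ * f θ ^ (-ν)) * (g θ ^ (-1:ℤ) * deriv g θ)) :=
    hMc.mul (hMc.mul ((hgz (-1)).mul hg'c))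
  have hYc : Continuous fun θ => ((ν:ℂ) * g θ ^ μ * f θ ^ (-ν))
      * (((ν:ℂ) * g θ ^ μ * f θ ^ (-ν)) * (f θ ^ (-1:ℤ) * deriv f θ)) :=
    hNc.mul (hNc.mul ((hfz (-1)).mul hf'c))
  have key : (ν:ℂ) * (∫ θ in (0:ℝ)..(2*Real.pi), ((μ:ℂ) * g θ ^ μ * f θ ^ (-ν))
        * (((μ:ℂ) * g θ ^ μ * f θ ^ (-ν)) * (g θ ^ (-1:ℤ) * deriv g θ)))
      - (μ:ℂ) * (∫ θ in (0:ℝ)..(2*Real.pi), ((ν:ℂ) * g θ ^ μ * f θ ^ (-ν))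
        * (((ν:ℂ) * g θ ^ μ * f θ ^ (-ν)) * (f θ ^ (-1:ℤ) * deriv f θ))) = 0 := by
    rw [← intervalIntegral.integral_const_mul, ← intervalIntegral.integral_const_mul,
      ← intervalIntegral.integral_sub
        ((continuous_const.fun_mul hXc).intervalIntegrable _ _)
        ((continuous_const.fun_mul hYc).intervalIntegrable _ _)]
    refine per_int_zero
      (fun θ => ((μ:ℂ)*(ν:ℂ)/2) * ((g θ ^ μ * f θ ^ (-ν)) * (g θ ^ μ * f θ ^ (-ν)))) _
      (fun θ => ?_)
      ((continuous_const.mul hXc).sub (continuous_const.mul hYc))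
      (by
        have hg2 : g (2*Real.pi) = g 0 := by simpa using hgper 0
        have hf2 : f (2*Real.pi) = f 0 := by simpa using hfper 0
        simp [hg2, hf2])
    have hu := curve_zpow_hasDerivAt g hg hg0 μ θ
    have hv := curve_zpow_hasDerivAt f hf hf0 (-ν) θ
    have huv := hu.fun_mul hv
    have hsq := (huv.fun_mul huv).const_mul ((μ:ℂ)*(ν:ℂ)/2)
    have e : ((μ:ℂ)*(ν:ℂ)/2) *
        (((μ:ℂ) * g θ ^ (μ-1) * deriv g θ * f θ ^ (-ν)
            + g θ ^ μ * (((-ν:ℤ):ℂ) * f θ ^ (-ν-1) * deriv f θ)) * (g θ ^ μ * f θ ^ (-ν))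
          + (g θ ^ μ * f θ ^ (-ν)) * ((μ:ℂ) * g θ ^ (μ-1) * deriv g θ * f θ ^ (-ν)
            + g θ ^ μ * (((-ν:ℤ):ℂ) * f θ ^ (-ν-1) * deriv f θ)))
        = (ν:ℂ) * (((μ:ℂ) * g θ ^ μ * f θ ^ (-ν))
            * (((μ:ℂ) * g θ ^ μ * f θ ^ (-ν)) * (g θ ^ (-1:ℤ) * deriv g θ)))
          - (μ:ℂ) * (((ν:ℂ) * g θ ^ μ * f θ ^ (-ν))
            * (((ν:ℂ) * g θ ^ μ * f θ ^ (-ν)) * (f θ ^ (-1:ℤ) * deriv f θ))) := by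
      have eg : g θ ^ (μ-1) = g θ ^ μ * g θ ^ (-1:ℤ) := by
        rw [← zpow_add₀ (hg0 θ), sub_eq_add_neg]
      have ef : f θ ^ (-ν-1) = f θ ^ (-ν) * f θ ^ (-1:ℤ) := by
        rw [← zpow_add₀ (hf0 θ), sub_eq_add_neg]
      rw [eg, ef]
      push_cast
      ring
    rw [e] at hsq
    exact hsq
  rw [hX, hY] at key
  apply mul_left_cancel₀ h2πi
  linear_combination key
end

section
/- Let A ⊆ ℂ∖{0} be open and connected, let g, f : A → ℂ∖{0} be holomorphic, let μ, ν be nonzero integers, and let L_g, L_f : A → ℂ be holomorphic with exp(L_g(w)) = g(w)/w and exp(L_f(w)) = f(w)/w on A. Let t₀ ∈ ℂ and let (t_n)_{n≥1}, (t_{−n})_{n≥1}, (v_n)_{n≥1}, (v_{−n})_{n≥1} be sequences such that the series Σ_{n≥1} n t_n g^{n}, Σ_{n≥1} v_n g^{−n}, Σ_{n≥1} n t_{−n} f^{−n}, Σ_{n≥1} v_{−n} f^{n}, as well as Σ_{n≥1} t_n g^{n}, Σ_{n≥1} (v_n/n) g^{−n}, Σ_{n≥1} t_{−n} f^{−n},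 Σ_{n≥1} (v_{−n}/n) f^{n}, all converge locally uniformly on A, and such that on A: μ·g^{μ}·f^{−ν} = Σ_{n≥1} n t_n g^{n} + t₀ + Σ_{n≥1} v_n g^{−n} and ν·g^{μ}·f^{−ν} = −Σ_{n≥1} n t_{−n} f^{−n} + t₀ − Σ_{n≥1} v_{−n} f^{n}. Then the function w ↦ g(w)^{μ} f(w)^{−ν} − [ Σ_{n≥1} t_n g(w)^{n} + t₀·L_g(w) − Σ_{n≥1} (v_n/n) g(w)^{−n} − Σ_{n≥1} t_{−n} f(w)^{−n} − t₀·L_f(w) + Σ_{n≥1} (v_{−n}/n) f(w)^{n} ] has identically vanishing derivative on A, hence is constant. -/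
open Filter Finset

private lemma congr_deriv' {f : ℂ → ℂ} {u v w : ℂ} (h : HasDerivAt f u w) (huv : u = v) :
    HasDerivAt f v w := huv ▸ h

private lemma hda_partial_pow (c : ℕ → ℂ) {g : ℂ → ℂ} {w dg : ℂ}
    (hgd : HasDerivAt g dg w) (hgw : g w ≠ 0) (N : ℕ) :
    HasDerivAt (fun w' => ∑ n ∈ Finset.range N, c n * g w' ^ (n + 1))
      (dg / g w * ∑ n ∈ Finset.range N, ((n : ℂ) + 1) * c n * g w ^ (n + 1)) w := by
  rw [Finset.mul_sum]
  apply HasDerivAt.fun_sum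
  intro n _
  have h := (hgd.pow (n + 1)).const_mul (c n)
  refine congr_deriv' h ?_
  simp only [Nat.add_sub_cancel]
  rw [pow_succ]
  push_cast
  field_simp

private lemma hda_partial_zpow (c : ℕ → ℂ) {g : ℂ → ℂ} {w dg : ℂ}
    (hgd : HasDerivAt g dg w) (hgw : g w ≠ 0) (N : ℕ) :
    HasDerivAt (fun w' => ∑ n ∈ Finset.range N, c n * g w' ^ (-(n + 1 : ℤ)))
      (-(dg / g w) * ∑ n ∈ Finset.range N, ((n : ℂ) + 1) * c n * g w ^ (-(n + 1 : ℤ))) w := by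
  rw [Finset.mul_sum]
  apply HasDerivAt.fun_sum
  intro n _
  have hz : HasDerivAt (fun w' => g w' ^ (-(n + 1 : ℤ)))
      ((((-(n + 1 : ℤ)) : ℂ) * g w ^ (-(n + 1 : ℤ) - 1)) * dg) w := by
    have h0 := HasDerivAt.comp w (hasDerivAt_zpow (-(n + 1 : ℤ)) (g w) (Or.inl hgw)) hgd
    rw [Int.cast_neg] at h0
    exact h0
  refine congr_deriv' (hz.const_mul (c n)) ?_
  rw [zpow_sub_one₀ hgw]
  push_cast
  field_simp

private lemma deriv_limit {A : Set ℂ} (hA : IsOpen A) {F : ℕ → ℂ → ℂ} {S : ℂ → ℂ}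
    (h : TendstoLocallyUniformlyOn F S Filter.atTop A)
    (hF : ∀ N, DifferentiableOn ℂ (F N) A)
    {w : ℂ} (hw : w ∈ A) {d : ℂ}
    (hd : Filter.Tendsto (fun N => deriv (F N) w) Filter.atTop (nhds d)) :
    HasDerivAt S d w := by
  have hdiff : DifferentiableOn ℂ S A := h.differentiableOn (Filter.Eventually.of_forall hF) hA
  have h2 := h.deriv (Filter.Eventually.of_forall hF) hA
  have h3 : Filter.Tendsto (fun N => deriv (F N) w) Filter.atTop (nhds (deriv S w)) :=
    h2.tendsto_at hw
  have hde : d = deriv S w := tendsto_nhds_unique hd h3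
  rw [hde]
  exact (hdiff.differentiableAt (hA.mem_nhds hw)).hasDerivAt

private lemma const_of_hasDerivAt_zero {A : Set ℂ} (hAopen : IsOpen A)
    (hAconn : IsConnected A) {F : ℂ → ℂ} (h : ∀ w ∈ A, HasDerivAt F 0 w) :
    ∃ c : ℂ, ∀ w ∈ A, F w = c := by
  obtain ⟨x₀, hx₀⟩ := hAconn.nonempty
  refine ⟨F x₀, fun w hw => ?_⟩
  have hdiff : DifferentiableOn ℂ F A := fun x hx =>
    (h x hx).differentiableAt.differentiableWithinAt
  have han : AnalyticOnNhd ℂ F A := hdiff.analyticOnNhd hAopen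
  have hloc : ∀ x ∈ A, ∀ᶠ y in nhds x, F y = F x := by
    intro x hx
    obtain ⟨r, hr, hball⟩ := Metric.isOpen_iff.mp hAopen x hx
    filter_upwards [Metric.ball_mem_nhds x hr] with y hy
    refine (convex_ball x r).is_const_of_fderivWithin_eq_zero
      (hdiff.mono hball) (fun z hz => ?_) hy (Metric.mem_ball_self hr)
    rw [fderivWithin_of_isOpen Metric.isOpen_ball hz]
    have hsr : (ContinuousLinearMap.smulRight (1 : ℂ →L[ℂ] ℂ) (0 : ℂ)) = 0 := by
      ext; simp
    have h0exp : HasFDerivAt F (0 : ℂ →L[ℂ] ℂ) z := hsr ▸ (h z (hball hz)).hasFDerivAt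
    exact h0exp.fderiv
  exact han.eqOn_of_preconnected_of_eventuallyEq analyticOnNhd_const
    hAconn.isPreconnected hx₀ (hloc x₀ hx₀) hw


/-- For the special solution `ℋ(z₁,z₂) = z₁^μ z₂^{-ν}`: if the Orlov–Schulman expansions
`μ g^μ f^{-ν} = Σ n t_n g^n + t₀ + Σ v_n g^{-n}` and
`ν g^μ f^{-ν} = -Σ n t_{-n} f^{-n} + t₀ - Σ v_{-n} f^n` hold on a connected open set
`A ⊆ ℂ∖{0}`, with all the relevant series converging locally uniformly on `A`, and
`L_g, L_f` are holomorphic logarithms of `g(w)/w`, `f(w)/w`, then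
`g^μ f^{-ν} - [Σ t_n g^n + t₀ L_g - Σ (v_n/n) g^{-n} - Σ t_{-n} f^{-n} - t₀ L_f + Σ (v_{-n}/n) f^n]`
has identically vanishing derivative on `A`, hence is constant. -/
theorem stmt_17
    (A : Set ℂ) (hAopen : IsOpen A) (hAconn : IsConnected A) (hA0 : ∀ w ∈ A, w ≠ 0)
    (g f : ℂ → ℂ)
    (hg : DifferentiableOn ℂ g A) (hf : DifferentiableOn ℂ f A)
    (hg0 : ∀ w ∈ A, g w ≠ 0) (hf0 : ∀ w ∈ A, f w ≠ 0)
    (μ ν : ℤ) (hμ : μ ≠ 0) (hν : ν ≠ 0)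
    (Lg Lf : ℂ → ℂ)
    (hLg : DifferentiableOn ℂ Lg A) (hLf : DifferentiableOn ℂ Lf A)
    (hLgexp : ∀ w ∈ A, Complex.exp (Lg w) = g w / w)
    (hLfexp : ∀ w ∈ A, Complex.exp (Lf w) = f w / w)
    (t₀ : ℂ) (tp vp tm vm : ℕ → ℂ)
    (hS1 : TendstoLocallyUniformlyOn
      (fun N w => ∑ n ∈ Finset.range N, ((n : ℂ) + 1) * tp (n + 1) * g w ^ (n + 1))
      (fun w => ∑' n : ℕ, ((n : ℂ) + 1) * tp (n + 1) * g w ^ (n + 1)) Filter.atTop A)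
    (hS2 : TendstoLocallyUniformlyOn
      (fun N w => ∑ n ∈ Finset.range N, vp (n + 1) * g w ^ (-(n + 1 : ℤ)))
      (fun w => ∑' n : ℕ, vp (n + 1) * g w ^ (-(n + 1 : ℤ))) Filter.atTop A)
    (hS3 : TendstoLocallyUniformlyOn
      (fun N w => ∑ n ∈ Finset.range N, ((n : ℂ) + 1) * tm (n + 1) * f w ^ (-(n + 1 : ℤ)))
      (fun w => ∑' n : ℕ, ((n : ℂ) + 1) * tm (n + 1) * f w ^ (-(n + 1 : ℤ))) Filter.atTop A)
    (hS4 : TendstoLocallyUniformlyOn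
      (fun N w => ∑ n ∈ Finset.range N, vm (n + 1) * f w ^ (n + 1))
      (fun w => ∑' n : ℕ, vm (n + 1) * f w ^ (n + 1)) Filter.atTop A)
    (hS5 : TendstoLocallyUniformlyOn
      (fun N w => ∑ n ∈ Finset.range N, tp (n + 1) * g w ^ (n + 1))
      (fun w => ∑' n : ℕ, tp (n + 1) * g w ^ (n + 1)) Filter.atTop A)
    (hS6 : TendstoLocallyUniformlyOn
      (fun N w => ∑ n ∈ Finset.range N, (vp (n + 1) / ((n : ℂ) + 1)) * g w ^ (-(n + 1 : ℤ)))
      (fun w => ∑' n : ℕ, (vp (n + 1) / ((n : ℂ) + 1)) * g w ^ (-(n + 1 : ℤ)))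
      Filter.atTop A)
    (hS7 : TendstoLocallyUniformlyOn
      (fun N w => ∑ n ∈ Finset.range N, tm (n + 1) * f w ^ (-(n + 1 : ℤ)))
      (fun w => ∑' n : ℕ, tm (n + 1) * f w ^ (-(n + 1 : ℤ))) Filter.atTop A)
    (hS8 : TendstoLocallyUniformlyOn
      (fun N w => ∑ n ∈ Finset.range N, (vm (n + 1) / ((n : ℂ) + 1)) * f w ^ (n + 1))
      (fun w => ∑' n : ℕ, (vm (n + 1) / ((n : ℂ) + 1)) * f w ^ (n + 1)) Filter.atTop A)
    (hexp₁ : ∀ w ∈ A,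
      (μ : ℂ) * g w ^ μ * f w ^ (-ν)
        = (∑' n : ℕ, ((n : ℂ) + 1) * tp (n + 1) * g w ^ (n + 1)) + t₀
          + ∑' n : ℕ, vp (n + 1) * g w ^ (-(n + 1 : ℤ)))
    (hexp₂ : ∀ w ∈ A,
      (ν : ℂ) * g w ^ μ * f w ^ (-ν)
        = -(∑' n : ℕ, ((n : ℂ) + 1) * tm (n + 1) * f w ^ (-(n + 1 : ℤ))) + t₀
          - ∑' n : ℕ, vm (n + 1) * f w ^ (n + 1)) :
    (∀ w ∈ A,
      HasDerivAt (fun w' =>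
        g w' ^ μ * f w' ^ (-ν)
          - ((∑' n : ℕ, tp (n + 1) * g w' ^ (n + 1)) + t₀ * Lg w'
              - (∑' n : ℕ, (vp (n + 1) / ((n : ℂ) + 1)) * g w' ^ (-(n + 1 : ℤ)))
              - (∑' n : ℕ, tm (n + 1) * f w' ^ (-(n + 1 : ℤ)))
              - t₀ * Lf w'
              + ∑' n : ℕ, (vm (n + 1) / ((n : ℂ) + 1)) * f w' ^ (n + 1))) 0 w) ∧
    ∃ c : ℂ, ∀ w ∈ A,
      g w ^ μ * f w ^ (-ν)
        - ((∑' n : ℕ, tp (n + 1) * g w ^ (n + 1)) + t₀ * Lg w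
            - (∑' n : ℕ, (vp (n + 1) / ((n : ℂ) + 1)) * g w ^ (-(n + 1 : ℤ)))
            - (∑' n : ℕ, tm (n + 1) * f w ^ (-(n + 1 : ℤ)))
            - t₀ * Lf w
            + ∑' n : ℕ, (vm (n + 1) / ((n : ℂ) + 1)) * f w ^ (n + 1)) = c := by
  have hder : ∀ w ∈ A,
      HasDerivAt (fun w' =>
        g w' ^ μ * f w' ^ (-ν)
          - ((∑' n : ℕ, tp (n + 1) * g w' ^ (n + 1)) + t₀ * Lg w'
              - (∑' n : ℕ, (vp (n + 1) / ((n : ℂ) + 1)) * g w' ^ (-(n + 1 : ℤ)))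
              - (∑' n : ℕ, tm (n + 1) * f w' ^ (-(n + 1 : ℤ)))
              - t₀ * Lf w'
              + ∑' n : ℕ, (vm (n + 1) / ((n : ℂ) + 1)) * f w' ^ (n + 1))) 0 w := by
    intro w hw
    have hgw := hg0 w hw
    have hfw := hf0 w hw
    have hw0 := hA0 w hw
    have hgd : HasDerivAt g (deriv g w) w :=
      (hg.differentiableAt (hAopen.mem_nhds hw)).hasDerivAt
    have hfd : HasDerivAt f (deriv f w) w :=
      (hf.differentiableAt (hAopen.mem_nhds hw)).hasDerivAt
    set dg := deriv g w with hdg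
    set df := deriv f w with hdf
    -- derivative of Lg
    have hLgd : HasDerivAt Lg (deriv Lg w) w :=
      (hLg.differentiableAt (hAopen.mem_nhds hw)).hasDerivAt
    have hLfd : HasDerivAt Lf (deriv Lf w) w :=
      (hLf.differentiableAt (hAopen.mem_nhds hw)).hasDerivAt
    have hdL : deriv Lg w = dg / g w - 1 / w := by
      have h1 : HasDerivAt (fun w' => Complex.exp (Lg w') * w')
          (Complex.exp (Lg w) * deriv Lg w * w + Complex.exp (Lg w) * 1) w :=
        (hLgd.cexp).mul (hasDerivAt_id w)
      have heq : g =ᶠ[nhds w] (fun w' => Complex.exp (Lg w') * w') := by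
        filter_upwards [hAopen.mem_nhds hw] with x hx
        rw [hLgexp x hx, div_mul_cancel₀ _ (hA0 x hx)]
      have h2 : HasDerivAt g
          (Complex.exp (Lg w) * deriv Lg w * w + Complex.exp (Lg w) * 1) w :=
        h1.congr_of_eventuallyEq heq
      have huniq := h2.unique hgd
      rw [hLgexp w hw] at huniq
      field_simp at huniq ⊢
      linear_combination huniq
    have hdLf : deriv Lf w = df / f w - 1 / w := by
      have h1 : HasDerivAt (fun w' => Complex.exp (Lf w') * w')
          (Complex.exp (Lf w) * deriv Lf w * w + Complex.exp (Lf w) * 1) w :=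
        (hLfd.cexp).mul (hasDerivAt_id w)
      have heq : f =ᶠ[nhds w] (fun w' => Complex.exp (Lf w') * w') := by
        filter_upwards [hAopen.mem_nhds hw] with x hx
        rw [hLfexp x hx, div_mul_cancel₀ _ (hA0 x hx)]
      have h2 : HasDerivAt f
          (Complex.exp (Lf w) * deriv Lf w * w + Complex.exp (Lf w) * 1) w :=
        h1.congr_of_eventuallyEq heq
      have huniq := h2.unique hfd
      rw [hLfexp w hw] at huniq
      field_simp at huniq ⊢
      linear_combination huniq
    have hLg' : HasDerivAt (fun w' => t₀ * Lg w') (t₀ * (dg / g w - 1 / w)) w :=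
      congr_deriv' (hLgd.const_mul t₀) (by rw [hdL])
    have hLf' : HasDerivAt (fun w' => t₀ * Lf w') (t₀ * (df / f w - 1 / w)) w :=
      congr_deriv' (hLfd.const_mul t₀) (by rw [hdLf])
    -- the main power term
    have hXd : HasDerivAt (fun w' => g w' ^ μ) (((μ : ℂ) * g w ^ (μ - 1)) * dg) w := by
      exact HasDerivAt.comp w (hasDerivAt_zpow μ (g w) (Or.inl hgw)) hgd
    have hYd : HasDerivAt (fun w' => f w' ^ (-ν)) ((((-ν : ℤ) : ℂ) * f w ^ (-ν - 1)) * df) w := by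
      exact HasDerivAt.comp w (hasDerivAt_zpow (-ν) (f w) (Or.inl hfw)) hfd
    have hP : HasDerivAt (fun w' => g w' ^ μ * f w' ^ (-ν))
        (dg / g w * ((μ : ℂ) * g w ^ μ * f w ^ (-ν))
          - df / f w * ((ν : ℂ) * g w ^ μ * f w ^ (-ν))) w := by
      refine congr_deriv' (hXd.mul hYd) ?_
      rw [zpow_sub_one₀ hgw, zpow_sub_one₀ hfw]
      push_cast
      field_simp
      ring
    -- derivatives of the four tsums
    have hD5 : HasDerivAt (fun w' => ∑' n : ℕ, tp (n + 1) * g w' ^ (n + 1))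
        (dg / g w * ∑' n : ℕ, ((n : ℂ) + 1) * tp (n + 1) * g w ^ (n + 1)) w := by
      refine deriv_limit hAopen hS5 (fun N x hx => ((hda_partial_pow (fun n => tp (n + 1))
        ((hg.differentiableAt (hAopen.mem_nhds hx)).hasDerivAt) (hg0 x hx)
        N).differentiableAt).differentiableWithinAt) hw ?_
      refine ((hS1.tendsto_at hw).const_mul (dg / g w)).congr (fun N => ?_)
      exact ((hda_partial_pow (fun n => tp (n + 1)) hgd hgw N).deriv).symm
    have hD6 : HasDerivAt
        (fun w' => ∑' n : ℕ, (vp (n + 1) / ((n : ℂ) + 1)) * g w' ^ (-(n + 1 : ℤ)))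
        (-(dg / g w) * ∑' n : ℕ, vp (n + 1) * g w ^ (-(n + 1 : ℤ))) w := by
      refine deriv_limit hAopen hS6 (fun N x hx => ((hda_partial_zpow
        (fun n => vp (n + 1) / ((n : ℂ) + 1))
        ((hg.differentiableAt (hAopen.mem_nhds hx)).hasDerivAt) (hg0 x hx)
        N).differentiableAt).differentiableWithinAt) hw ?_
      refine ((hS2.tendsto_at hw).const_mul (-(dg / g w))).congr (fun N => ?_)
      rw [(hda_partial_zpow (fun n => vp (n + 1) / ((n : ℂ) + 1)) hgd hgw N).deriv]
      congr 1
      refine Finset.sum_congr rfl (fun n _ => ?_)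
      have hne : ((n : ℂ) + 1) ≠ 0 := Nat.cast_add_one_ne_zero n
      field_simp
    have hD7 : HasDerivAt (fun w' => ∑' n : ℕ, tm (n + 1) * f w' ^ (-(n + 1 : ℤ)))
        (-(df / f w) * ∑' n : ℕ, ((n : ℂ) + 1) * tm (n + 1) * f w ^ (-(n + 1 : ℤ))) w := by
      refine deriv_limit hAopen hS7 (fun N x hx => ((hda_partial_zpow (fun n => tm (n + 1))
        ((hf.differentiableAt (hAopen.mem_nhds hx)).hasDerivAt) (hf0 x hx)
        N).differentiableAt).differentiableWithinAt) hw ?_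
      refine ((hS3.tendsto_at hw).const_mul (-(df / f w))).congr (fun N => ?_)
      exact ((hda_partial_zpow (fun n => tm (n + 1)) hfd hfw N).deriv).symm
    have hD8 : HasDerivAt (fun w' => ∑' n : ℕ, (vm (n + 1) / ((n : ℂ) + 1)) * f w' ^ (n + 1))
        (df / f w * ∑' n : ℕ, vm (n + 1) * f w ^ (n + 1)) w := by
      refine deriv_limit hAopen hS8 (fun N x hx => ((hda_partial_pow
        (fun n => vm (n + 1) / ((n : ℂ) + 1))
        ((hf.differentiableAt (hAopen.mem_nhds hx)).hasDerivAt) (hf0 x hx)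
        N).differentiableAt).differentiableWithinAt) hw ?_
      refine ((hS4.tendsto_at hw).const_mul (df / f w)).congr (fun N => ?_)
      rw [(hda_partial_pow (fun n => vm (n + 1) / ((n : ℂ) + 1)) hfd hfw N).deriv]
      congr 1
      refine Finset.sum_congr rfl (fun n _ => ?_)
      have hne : ((n : ℂ) + 1) ≠ 0 := Nat.cast_add_one_ne_zero n
      field_simp
    refine congr_deriv' (hP.sub (((((hD5.add hLg').sub hD6).sub hD7).sub hLf').add hD8)) ?_
    have E1 := hexp₁ w hw
    have E2 := hexp₂ w hw
    linear_combination (dg / g w) * E1 - (df / f w) * E2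
  exact ⟨hder, const_of_hasDerivAt_zero hAopen hAconn hder⟩
end
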